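/- Let g = ⊕_{j∈ℤ} g(j) be the eigenspace decomposition of a Lie algebra under ad h, let e ∈ g(2), χ(x) = (e|x) for an invariant symmetric form, let l ⊆ g(-1) be a subspace that is isotropic for the form ω_χ(x,y) = χ([x,y]), and set m := l ⊕ ⊕_{j<-1} g(j). Then χ vanishes on [m,m]; i.e., χ restricts to a Lie algebra character of m. -/
import Mathlib


/-- Let `g = ⊕ g(j)` be the `ad h`-eigenspace decomposition, `e ∈ g(2)`,
`χ x = B e x` for an invariant symmetric form `B`, `l ⊆ g(-1)` isotropic for
`ω_χ(x,y) = χ [x,y]`, and `m = l ⊕ ⊕_{j ≤ -2} g(j)`. Then `χ` vanishes on `[m,m]`,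
i.e. `χ` restricts to a Lie algebra character of `m`. -/
theorem chi_is_character_of_m {K : Type*} [Field K] [CharZero K]
    {g : Type*} [LieRing g] [LieAlgebra K g]
    (B : g →ₗ[K] g →ₗ[K] K)
    (hsymm : ∀ x y : g, B x y = B y x)
    (hinv : ∀ x y z : g, B ⁅x, y⁆ z = B x ⁅y, z⁆)
    (h e : g) (hhe : ⁅h, e⁆ = (2 : K) • e)
    (l : Submodule K g)
    (hl : l ≤ Module.End.eigenspace (LieAlgebra.ad K g h) ((-1 : ℤ) : K))
    (hiso : ∀ x ∈ l, ∀ y ∈ l, B e ⁅x, y⁆ = 0)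
    (m : Submodule K g)
    (hm : m = l ⊔ ⨆ j : ℤ, ⨆ _ : j ≤ -2,
      Module.End.eigenspace (LieAlgebra.ad K g h) (j : K)) :
    ∀ x ∈ m, ∀ y ∈ m, B e ⁅x, y⁆ = 0 := by
  set T : Submodule K g := ⨆ j : ℤ, ⨆ _ : j ≤ -2,
      Module.End.eigenspace (LieAlgebra.ad K g h) (j : K) with hT
  -- χ(⁅h, w⁆) = -2 χ(w)
  have hBh : ∀ w : g, B e ⁅h, w⁆ = -(2 * B e w) := by
    intro w
    have h1 := hinv e h w
    rw [← lie_skew e h, hhe] at h1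
    simpa [map_neg, map_smul, smul_eq_mul] using h1.symm
  -- eigenvector pairing vanishing
  have hchar : ∀ (a b : ℤ) (x y : g), ⁅h, x⁆ = (a : K) • x → ⁅h, y⁆ = (b : K) • y →
      a + b ≠ -2 → B e ⁅x, y⁆ = 0 := by
    intro a b x y hx hy hab
    have h1 : ⁅h, ⁅x, y⁆⁆ = ((a : K) + b) • ⁅x, y⁆ := by
      rw [leibniz_lie, hx, hy, smul_lie, lie_smul, add_smul]
    have h2 := hBh ⁅x, y⁆
    rw [h1, map_smul, smul_eq_mul] at h2
    have h3 : ((a + b + 2 : ℤ) : K) * B e ⁅x, y⁆ = 0 := by push_cast; linear_combination h2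
    have h4 : ((a + b + 2 : ℤ) : K) ≠ 0 := Int.cast_ne_zero.mpr (by omega)
    exact (mul_eq_zero.mp h3).resolve_left h4
  have hmem : ∀ (j : ℤ) (z : g),
      z ∈ Module.End.eigenspace (LieAlgebra.ad K g h) ((j : ℤ) : K) ↔
        ⁅h, z⁆ = ((j : ℤ) : K) • z := by
    intro j z
    rw [Module.End.mem_eigenspace_iff, LieAlgebra.ad_apply]
  have hl' : ∀ z ∈ l, ⁅h, z⁆ = ((-1 : ℤ) : K) • z := fun z hz => (hmem (-1) z).mp (hl hz)
  -- the "kernel" submodule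
  have hmemN : ∀ z w : g, w ∈ LinearMap.ker ((B e).comp (LieAlgebra.ad K g z)) ↔
      B e ⁅z, w⁆ = 0 := by
    intro z w
    rw [LinearMap.mem_ker, LinearMap.comp_apply, LieAlgebra.ad_apply]
  have hT_le : ∀ (a : ℤ) (z : g), ⁅h, z⁆ = (a : K) • z → (∀ j : ℤ, j ≤ -2 → a + j ≠ -2) →
      T ≤ LinearMap.ker ((B e).comp (LieAlgebra.ad K g z)) := by
    intro a z hz ha
    refine iSup_le fun j => iSup_le fun hj w hw => ?_
    exact (hmemN z w).mpr (hchar a j z w hz ((hmem j w).mp hw) (ha j hj))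
  have hskew : ∀ x y : g, B e ⁅x, y⁆ = -(B e ⁅y, x⁆) := by
    intro x y; rw [← lie_skew, map_neg]
  -- T × T vanishing
  have hTT : ∀ w ∈ T, ∀ z ∈ T, B e ⁅z, w⁆ = 0 := by
    intro w hw
    have : T ≤ LinearMap.ker ((B e).comp (-(LieAlgebra.ad K g w))) := by
      refine iSup_le fun j => iSup_le fun hj z hz => ?_
      have h5 : B e ⁅z, w⁆ = 0 :=
        (hmemN z w).mp (hT_le j z ((hmem j z).mp hz) (fun k hk => by omega) hw)
      simp only [LinearMap.mem_ker, LinearMap.comp_apply, LinearMap.neg_apply,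
        LieAlgebra.ad_apply, ← lie_skew w z, map_neg, neg_neg, h5, neg_zero]
    intro z hz
    have h6 := this hz
    simp only [LinearMap.mem_ker, LinearMap.comp_apply, LinearMap.neg_apply,
      LieAlgebra.ad_apply, ← lie_skew w z, map_neg, neg_neg] at h6
    exact h6
  -- l × T vanishing
  have hlT : ∀ x ∈ l, ∀ y ∈ T, B e ⁅x, y⁆ = 0 := by
    intro x hx y hy
    exact (hmemN x y).mp (hT_le (-1) x (hl' x hx) (fun k hk => by omega) hy)
  subst hm
  intro x hx y hy
  obtain ⟨x₁, hx₁, x₂, hx₂, rfl⟩ := Submodule.mem_sup.mp hx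
  obtain ⟨y₁, hy₁, y₂, hy₂, rfl⟩ := Submodule.mem_sup.mp hy
  rw [add_lie, lie_add, lie_add, map_add, map_add, map_add]
  rw [hiso x₁ hx₁ y₁ hy₁, hlT x₁ hx₁ y₂ hy₂, hTT y₂ hy₂ x₂ hx₂,
    hskew x₂ y₁, hlT y₁ hy₁ x₂ hx₂]
  ring
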